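/- Let v = ((m_1,r_1),…,(m_n,r_n)) with all r_i > 0 be such that the sum H_v : S¹ → ℕ is properly upper semicontinuous, every boundary trace ∂h_{(m_i,r_i)} has exactly 0 or exactly 2 elements, and every disk meets the circle (i.e., {y : ‖y − m_i‖ ≤ r_i} ∩ S¹ ≠ ∅ for each i). Then max(H_v*, H_v* − H_{v*} + τ(H_v)) ≤ n ≤ H_v* + τ(H_v), where H_v* = max H_v and H_{v*} = min H_v. -/

import Mathlib

noncomputable section

open scoped BigOperators
open Classical

/-- The unit circle `S¹` in the plane (modeled as `ℂ ≅ ℝ²` with the Euclidean norm). -/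
def S1 : Set ℂ := {x : ℂ | ‖x‖ = 1}

/-- The signal function `h_{(m,r)}`: indicator of the closed disk of center `m`, radius `r`. -/
def signal (m : ℂ) (r : ℝ) (x : ℂ) : ℕ := if ‖x - m‖ ≤ r then 1 else 0

/-- The boundary trace `∂h_{(m,r)} = {x ∈ S¹ : ‖x − m‖ = r}`. -/
def bTrace (m : ℂ) (r : ℝ) : Set ℂ := {x : ℂ | ‖x‖ = 1 ∧ ‖x - m‖ = r}

/-- The sum `H_v` of the signal functions of the disk data `v = ((m_i, r_i))_{i<n}`. -/
def Hsum {n : ℕ} (v : Fin n → ℂ × ℝ) (x : ℂ) : ℕ := ∑ i, signal (v i).1 (v i).2 x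

/-- Rotation of the plane by angle `t` about the origin. -/
def rot (t : ℝ) (x : ℂ) : ℂ := Complex.exp (t * Complex.I) * x

/-- `H(x⁺) = a`: `H` equals `a` just after `x` (counterclockwise). -/
def rightVal (H : ℂ → ℕ) (x : ℂ) (a : ℕ) : Prop :=
  ∃ δ > (0 : ℝ), ∀ t : ℝ, 0 < t → t < δ → H (rot t x) = a

/-- `H(x⁻) = b`: `H` equals `b` just before `x`. -/
def leftVal (H : ℂ → ℕ) (x : ℂ) (b : ℕ) : Prop :=
  ∃ δ > (0 : ℝ), ∀ t : ℝ, -δ < t → t < 0 → H (rot t x) = b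

/-- `H` is properly upper semicontinuous on `S¹`: at each point both one-sided limits
exist and the value equals their maximum. -/
def ProperlyUSC (H : ℂ → ℕ) : Prop :=
  ∀ x ∈ S1, ∃ a b : ℕ, rightVal H x a ∧ leftVal H x b ∧ H x = max a b

/-- `H* = max_{S¹} H`. -/
def maxOnS1 (H : ℂ → ℕ) : ℕ := sSup (H '' S1)

/-- `H_* = min_{S¹} H`. -/
def minOnS1 (H : ℂ → ℕ) : ℕ := sInf (H '' S1)

/-- The superlevel set `{x ∈ S¹ : H(x) ≥ k}`. -/
def superlevel (H : ℂ → ℕ) (k : ℕ) : Set ℂ := {x ∈ S1 | k ≤ H x}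

/-- Number of connected components of a subset of the plane. -/
def numCC (A : Set ℂ) : ℕ := Nat.card (ConnectedComponents ↥A)

/-- `τ(H) = Σ_{k=H_*+1}^{H*} (c_k(H) − 1)`. -/
def tau (H : ℂ → ℕ) : ℕ :=
  ∑ k ∈ Finset.Icc (minOnS1 H + 1) (maxOnS1 H), (numCC (superlevel H k) - 1)

/-- `ρ` for the degrees-of-freedom count. -/
def rho (m : ℂ) (r : ℝ) : ℕ :=
  if bTrace m r = ∅ then 3
  else if (bTrace m r).ncard = 1 ∨ (bTrace m r).ncard = 2 then 1
  else 0

/-- `N`-degrees of freedom of a decomposition with `n ≤ N` signals. -/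
def DoF (N : ℕ) {n : ℕ} (v : Fin n → ℂ × ℝ) : ℕ :=
  3 * (N - n) + ∑ i, rho (v i).1 (v i).2

namespace S17

noncomputable def ee (t : ℝ) : ℂ := Complex.exp (t * Complex.I)

lemma ee_mem_S1 (t : ℝ) : ee t ∈ S1 := by
  simp [ee, S1, Complex.norm_exp]

lemma ee_surj {x : ℂ} (hx : x ∈ S1) : ee (Complex.arg x) = x := by
  have := Complex.norm_mul_exp_arg_mul_I x
  simpa [ee, S1, (show ‖x‖ = 1 from hx)] using this

lemma ee_eq_iff {s t : ℝ} : ee s = ee t ↔ ∃ n : ℤ, s = t + 2 * Real.pi * n := by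
  constructor
  · intro h
    rcases Complex.exp_eq_exp_iff_exists_int.1 h with ⟨n, hn⟩
    refine ⟨n, ?_⟩
    have him := congrArg Complex.im hn
    rw [show t + 2 * Real.pi * (n:ℝ) = t + n * (2*Real.pi) by ring]
    simpa using him
  · rintro ⟨n, rfl⟩
    show Complex.exp _ = _
    rw [show ((t + 2 * Real.pi * n : ℝ) : ℂ) * Complex.I = t * Complex.I + n * (2 * Real.pi * Complex.I) by push_cast; ring]
    rw [Complex.exp_add, Complex.exp_int_mul_two_pi_mul_I, mul_one]
    rfl

lemma ee_add_int (t : ℝ) (n : ℤ) : ee (t + 2 * Real.pi * n) = ee t :=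
  ee_eq_iff.2 ⟨n, rfl⟩

lemma continuous_ee : Continuous ee := by
  exact Complex.continuous_exp.comp (by continuity)

/-- fractional part scaled: `F s ∈ [0, 2π)`, `s - F s ∈ 2πℤ`. -/
noncomputable def F (s : ℝ) : ℝ := 2 * Real.pi * Int.fract (s / (2 * Real.pi))

lemma two_pi_pos : (0:ℝ) < 2 * Real.pi := by positivity

lemma F_nonneg (s : ℝ) : 0 ≤ F s :=
  mul_nonneg (le_of_lt two_pi_pos) (Int.fract_nonneg _)

lemma F_lt (s : ℝ) : F s < 2 * Real.pi := by
  have h := Int.fract_lt_one (s / (2 * Real.pi))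
  calc F s < 2 * Real.pi * 1 := (mul_lt_mul_iff_right₀ two_pi_pos).2 h
    _ = 2 * Real.pi := by ring

lemma F_spec (s : ℝ) : s = F s + 2 * Real.pi * ⌊s / (2 * Real.pi)⌋ := by
  have h : Int.fract (s / (2 * Real.pi)) = s / (2 * Real.pi) - ⌊s / (2 * Real.pi)⌋ :=
    (Int.self_sub_floor _).symm
  have h2π : (2 * Real.pi) ≠ 0 := ne_of_gt two_pi_pos
  rw [F, h]
  field_simp
  ring

/-- congruence mod 2π determines F -/
lemma F_eq_of_int (s : ℝ) (n : ℤ) : F (s + 2 * Real.pi * n) = F s := by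
  have h2π : (2 * Real.pi) ≠ 0 := ne_of_gt two_pi_pos
  unfold F
  rw [show (s + 2 * Real.pi * n) / (2 * Real.pi) = s / (2 * Real.pi) + n by field_simp,
    Int.fract_add_intCast]

lemma F_eq_self {s : ℝ} (h0 : 0 ≤ s) (h1 : s < 2 * Real.pi) : F s = s := by
  unfold F
  rw [Int.fract_eq_self.2 ⟨by positivity, by rw [div_lt_one two_pi_pos]; exact h1⟩]
  field_simp

lemma ee_eq_ee_iff_F (s t : ℝ) : ee s = ee t ↔ F (s - t) = 0 := by
  rw [ee_eq_iff]
  constructor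
  · rintro ⟨n, rfl⟩
    have : (t + 2 * Real.pi * n) - t = 0 + 2 * Real.pi * n := by ring
    rw [this, F_eq_of_int, F_eq_self le_rfl two_pi_pos]
  · intro h
    have := F_spec (s - t)
    rw [h] at this
    exact ⟨⌊(s - t)/(2 * Real.pi)⌋, by linarith⟩

/-- shifting within the fundamental domain -/
lemma F_add {s t : ℝ} (h0 : 0 ≤ F s + t) (h1 : F s + t < 2 * Real.pi) :
    F (s + t) = F s + t := by
  have h := F_spec s
  have : s + t = (F s + t) + 2 * Real.pi * ⌊s / (2 * Real.pi)⌋ := by linarith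
  rw [this, F_eq_of_int, F_eq_self h0 h1]

lemma F_sub {s t : ℝ} (h0 : 0 ≤ F s - t) (h1 : F s - t < 2 * Real.pi) :
    F (s - t) = F s - t := by
  have := F_add (s := s) (t := -t) (by linarith) (by linarith)
  simpa [sub_eq_add_neg] using this

lemma F_sub_wrap {s t : ℝ} (h0 : F s - t + 2 * Real.pi ≥ 0) (hneg : F s - t < 0) :
    F (s - t) = F s - t + 2 * Real.pi := by
  have h := F_spec s
  have : s - t = (F s - t + 2 * Real.pi) + 2 * Real.pi * ((⌊s / (2 * Real.pi)⌋ - 1 : ℤ) : ℝ) := by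
    push_cast; linarith
  rw [this, F_eq_of_int, F_eq_self h0 (by linarith)]


lemma norm_ee_sub_sq (t : ℝ) (m : ℂ) :
    ‖ee t - m‖^2 = 1 + ‖m‖^2 - 2 * ‖m‖ * Real.cos (t - Complex.arg m) := by
  have h1 : ‖ee t - m‖^2 = Complex.normSq (ee t - m) := by
    rw [Complex.sq_norm]
  rw [h1, Complex.normSq_sub]
  have h2 : Complex.normSq (ee t) = 1 := by
    have : ‖ee t‖ = 1 := by simp [ee, Complex.norm_exp]
    rw [← Complex.sq_norm, this]; norm_num
  have h3 : (ee t * (starRingEnd ℂ) m).re = ‖m‖ * Real.cos (t - Complex.arg m) := by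
    conv_lhs => rw [← Complex.norm_mul_exp_arg_mul_I m]
    rw [map_mul, ← Complex.exp_conj]
    have : (starRingEnd ℂ) ((Complex.arg m : ℂ) * Complex.I) = -(Complex.arg m : ℂ) * Complex.I := by
      simp [Complex.conj_I]
    rw [this]
    have hconjabs : (starRingEnd ℂ) ((‖m‖ : ℝ) : ℂ) = ((‖m‖ : ℝ) : ℂ) :=
      Complex.conj_ofReal _
    rw [hconjabs]
    rw [show ee t * (((‖m‖ : ℝ):ℂ) * Complex.exp (-(Complex.arg m:ℂ) * Complex.I))
        = ((‖m‖ : ℝ):ℂ) * Complex.exp (((t - Complex.arg m : ℝ):ℂ) * Complex.I) by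
      rw [ee, mul_comm (Complex.exp _), mul_assoc, ← Complex.exp_add]
      push_cast; ring_nf]
    rw [Complex.re_ofReal_mul, Complex.exp_ofReal_mul_I_re]
  rw [h2, h3]
  have : Complex.normSq m = ‖m‖^2 := by rw [Complex.sq_norm]
  rw [this]; ring

lemma cos_ge_iff (φ : ℝ) (hφ0 : 0 < φ) (hφπ : φ < Real.pi) (y : ℝ) (hy : -φ ≤ y) (hy2 : y < 2*Real.pi - φ) :
    (Real.cos φ ≤ Real.cos y ↔ y ≤ φ) ∧ (Real.cos y = Real.cos φ ↔ (y = -φ ∨ y = φ)) := by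
  have hπ := Real.pi_pos
  rcases le_or_gt y φ with h | h
  · have habs : |y| ≤ φ := abs_le.2 ⟨hy, h⟩
    have h1 : Real.cos φ ≤ Real.cos y := by
      rw [← Real.cos_abs y]
      exact Real.strictAntiOn_cos.antitoneOn ⟨abs_nonneg _, le_of_lt (lt_of_le_of_lt habs hφπ)⟩
        ⟨le_of_lt hφ0, le_of_lt hφπ⟩ habs
    refine ⟨iff_of_true h1 h, ?_⟩
    constructor
    · intro he
      by_contra hne
      push_neg at hne
      have habs' : |y| < φ := lt_of_le_of_ne habs (by
        intro habseq
        rcases abs_eq (le_of_lt hφ0) |>.1 habseq with h' | h'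
        · exact hne.2 h'
        · exact hne.1 h')
      have := Real.strictAntiOn_cos ⟨abs_nonneg _, by linarith⟩ ⟨le_of_lt hφ0, le_of_lt hφπ⟩ habs'
      rw [Real.cos_abs] at this
      linarith
    · rintro (rfl | rfl) <;> simp [Real.cos_neg]
  · have h1 : Real.cos y < Real.cos φ := by
      rcases le_or_gt y Real.pi with hyπ | hyπ
      · exact Real.strictAntiOn_cos ⟨le_of_lt hφ0, le_of_lt hφπ⟩ ⟨by linarith, hyπ⟩ h
      · have h2 : Real.cos y = Real.cos (2*Real.pi - y) := (Real.cos_two_pi_sub y).symm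
        rw [h2]
        exact Real.strictAntiOn_cos ⟨le_of_lt hφ0, le_of_lt hφπ⟩ ⟨by linarith, by linarith⟩
          (by linarith)
    exact ⟨iff_of_false (not_le.2 h1) (not_le.2 h), iff_of_false (ne_of_lt h1) (by
      intro h'; rcases h' with rfl | rfl <;> linarith)⟩

lemma S1_eq_sphere : S1 = Metric.sphere (0:ℂ) 1 := by
  ext x; simp [S1, Metric.mem_sphere, dist_zero_right]

lemma isConnected_S1 : IsConnected S1 := by
  rw [S1_eq_sphere]
  exact isConnected_sphere (by rw [Complex.rank_real_complex]; norm_num) 0 zero_le_one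

lemma S1_infinite : S1.Infinite := by
  apply Set.infinite_of_injective_forall_mem (f := fun k : ℕ => ee (1/(k+1)))
    (hf := ?_) ?_
  · intro j k hjk
    rcases ee_eq_iff.1 hjk with ⟨n, hn⟩
    have hπ := Real.pi_gt_three
    have hj : (0:ℝ) < 1/(j+1) := by positivity
    have hk : (0:ℝ) < 1/(k+1) := by positivity
    have hj1 : (1:ℝ)/(j+1) ≤ 1 := by
      rw [div_le_one (by positivity)]; push_cast; linarith
    have hk1 : (1:ℝ)/(k+1) ≤ 1 := by
      rw [div_le_one (by positivity)]; push_cast; linarith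
    have hn0 : n = 0 := by
      by_contra h0
      rcases lt_or_gt_of_ne h0 with h | h
      · have : (n:ℝ) ≤ -1 := by exact_mod_cast Int.le_sub_one_of_lt h
        nlinarith
      · have : (1:ℝ) ≤ (n:ℝ) := by exact_mod_cast h
        nlinarith
    rw [hn0] at hn
    push_cast at hn
    field_simp at hn
    simp at hn; omega
  · intro k; exact ee_mem_S1 _
-- norm ≤ r iff cos ≥ u, m ≠ 0
lemma mem_disk_iff (m : ℂ) (hm : m ≠ 0) (r : ℝ) (hr : 0 < r) (t : ℝ) :
    (‖ee t - m‖ ≤ r ↔ (1 + ‖m‖^2 - r^2)/(2*‖m‖) ≤ Real.cos (t - Complex.arg m)) ∧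
    (‖ee t - m‖ = r ↔ (1 + ‖m‖^2 - r^2)/(2*‖m‖) = Real.cos (t - Complex.arg m)) := by
  have hm' : 0 < ‖m‖ := norm_pos_iff.2 hm
  have hsq := norm_ee_sub_sq t m
  constructor
  · rw [← pow_le_pow_iff_left₀ (norm_nonneg _) (le_of_lt hr) (two_ne_zero), hsq,
      div_le_iff₀ (by positivity)]
    constructor <;> intro h <;> nlinarith
  · have hiff : ‖ee t - m‖ = r ↔ ‖ee t - m‖^2 = r^2 := by
      constructor
      · intro h; rw [h]
      · intro h; exact (pow_left_inj₀ (norm_nonneg _) (le_of_lt hr) two_ne_zero).1 h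
    rw [hiff, hsq, div_eq_iff (by positivity : (2*‖m‖) ≠ 0)]
    constructor <;> intro h <;> nlinarith

lemma trace_angle (m : ℂ) (hm : m ≠ 0) (r : ℝ) (hr : 0 < r) (x : ℂ) :
    x ∈ bTrace m r ↔ x ∈ S1 ∧ (1 + ‖m‖^2 - r^2)/(2*‖m‖) = Real.cos (Complex.arg x - Complex.arg m) := by
  constructor
  · rintro ⟨h1, h2⟩
    have hx1 : x ∈ S1 := h1
    have := ((mem_disk_iff m hm r hr (Complex.arg x)).2).1 (by rw [ee_surj hx1]; exact h2)
    exact ⟨hx1, this⟩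
  · rintro ⟨h1, h2⟩
    have := ((mem_disk_iff m hm r hr (Complex.arg x)).2).2 h2
    rw [ee_surj h1] at this
    exact ⟨h1, this⟩


lemma cos_congr_period {x y : ℝ} (h : ∃ n : ℤ, x = y + 2*Real.pi*n) :
    Real.cos x = Real.cos y := by
  rcases h with ⟨n, rfl⟩
  rw [show y + 2*Real.pi*(n:ℝ) = y - ((-n : ℤ) : ℝ) * (2*Real.pi) by push_cast; ring,
    Real.cos_sub_int_mul_two_pi]

/-- The master classification. -/
lemma classify (m : ℂ) (r : ℝ) (hr : 0 < r)
    (hcard : bTrace m r = ∅ ∨ (bTrace m r).ncard = 2)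
    (hmeet : ({y : ℂ | ‖y - m‖ ≤ r} ∩ S1).Nonempty) :
    (∀ x ∈ S1, ‖x - m‖ ≤ r) ∨
    (∃ α c : ℝ, 0 < c ∧ c < 2*Real.pi ∧ ∀ t : ℝ, (‖ee t - m‖ ≤ r ↔ F (t - α) ≤ c)) := by
  have hπ := Real.pi_pos
  rcases hcard with hempty | h2
  · left
    obtain ⟨x₀, hx₀d, hx₀s⟩ := hmeet
    intro y hy
    by_contra hgt
    push_neg at hgt
    have hiv := isConnected_S1.isPreconnected.intermediate_value hx₀s hy
      (f := fun x => ‖x - m‖) (by fun_prop)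
    obtain ⟨z, hz, hzr⟩ := hiv ⟨hx₀d, le_of_lt hgt⟩
    have : z ∈ bTrace m r := ⟨hz, hzr⟩
    rw [hempty] at this
    exact this
  · right
    have hm : m ≠ 0 := by
      rintro rfl
      obtain ⟨x, hx⟩ := Set.nonempty_of_ncard_ne_zero (by rw [h2]; norm_num)
      rcases hx with ⟨hx1, hx2⟩
      rw [sub_zero] at hx2
      have hr1 : r = 1 := by rw [← hx2, hx1]
      have : bTrace 0 r = S1 := by
        ext z
        constructor
        · rintro ⟨h1, _⟩; exact h1
        · intro h1; exact ⟨h1, by rwa [sub_zero, hr1]⟩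
      rw [this, S1_infinite.ncard] at h2
      norm_num at h2
    have ha0 : 0 < ‖m‖ := norm_pos_iff.2 hm
    rcases lt_trichotomy ((1 + ‖m‖^2 - r^2)/(2*‖m‖)) 1 with hu1 | hu1 | hu1
    · rcases lt_trichotomy ((1 + ‖m‖^2 - r^2)/(2*‖m‖)) (-1) with hun | hun | hun
      · exfalso
        have : bTrace m r = ∅ := by
          ext x
          simp only [Set.mem_empty_iff_false, iff_false]
          intro hx
          rw [trace_angle m hm r hr] at hx
          have := Real.neg_one_le_cos (Complex.arg x - Complex.arg m)
          rw [← hx.2] at this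
          linarith
        rw [this] at h2
        simp at h2
      · exfalso
        have : bTrace m r = {ee (Complex.arg m + Real.pi)} := by
          ext x
          rw [trace_angle m hm r hr]
          constructor
          · rintro ⟨hx1, hx2⟩
            rw [hun] at hx2
            rcases Real.cos_eq_neg_one_iff.1 hx2.symm with ⟨k, hk⟩
            have : Complex.arg x = (Complex.arg m + Real.pi) + 2*Real.pi * k := by linarith
            rw [Set.mem_singleton_iff, ← ee_surj hx1, this]
            exact ee_eq_iff.2 ⟨k, rfl⟩
          · rintro rfl
            refine ⟨ee_mem_S1 _, ?_⟩
            rcases ee_eq_iff.1 (ee_surj (ee_mem_S1 (Complex.arg m + Real.pi))) with ⟨n, hn⟩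
            have harg : Real.cos (Complex.arg (ee (Complex.arg m + Real.pi)) - Complex.arg m)
                = Real.cos Real.pi := cos_congr_period ⟨n, by rw [hn]; ring⟩
            rw [harg, Real.cos_pi, hun]
        rw [this, Set.ncard_singleton] at h2
        norm_num at h2
      · -- genuine arc
        have hcos : Real.cos (Real.arccos ((1 + ‖m‖^2 - r^2)/(2*‖m‖)))
            = (1 + ‖m‖^2 - r^2)/(2*‖m‖) := Real.cos_arccos (le_of_lt hun) (le_of_lt hu1)
        have hφ0 : 0 < Real.arccos ((1 + ‖m‖^2 - r^2)/(2*‖m‖)) := Real.arccos_pos.2 hu1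
        have hφπ : Real.arccos ((1 + ‖m‖^2 - r^2)/(2*‖m‖)) < Real.pi := by
          rcases lt_or_eq_of_le (Real.arccos_le_pi ((1 + ‖m‖^2 - r^2)/(2*‖m‖))) with h | h
          · exact h
          · exfalso; rw [h, Real.cos_pi] at hcos; linarith
        set φ := Real.arccos ((1 + ‖m‖^2 - r^2)/(2*‖m‖))
        refine ⟨Complex.arg m - φ, 2*φ, by linarith, by linarith, ?_⟩
        intro t
        rw [(mem_disk_iff m hm r hr t).1, ← hcos]
        have hcongr : Real.cos (t - Complex.arg m)
            = Real.cos (F (t - Complex.arg m + φ) - φ) := by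
          refine (cos_congr_period ⟨-⌊(t - Complex.arg m + φ)/(2*Real.pi)⌋, ?_⟩).symm
          push_cast
          linarith [F_spec (t - Complex.arg m + φ)]
        have hkey := cos_ge_iff φ hφ0 hφπ (F (t - Complex.arg m + φ) - φ)
          (by linarith [F_nonneg (t - Complex.arg m + φ)])
          (by linarith [F_lt (t - Complex.arg m + φ)])
        rw [hcongr, hkey.1]
        rw [show t - (Complex.arg m - φ) = t - Complex.arg m + φ by ring]
        constructor <;> intro h <;> linarith
    · exfalso
      have : bTrace m r = {ee (Complex.arg m)} := by
        ext x
        rw [trace_angle m hm r hr]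
        constructor
        · rintro ⟨hx1, hx2⟩
          rw [hu1] at hx2
          rcases (Real.cos_eq_one_iff _).1 hx2.symm with ⟨k, hk⟩
          have : Complex.arg x = Complex.arg m + 2*Real.pi * k := by push_cast at hk ⊢; linarith
          rw [Set.mem_singleton_iff, ← ee_surj hx1, this]
          exact ee_eq_iff.2 ⟨k, rfl⟩
        · rintro rfl
          refine ⟨ee_mem_S1 _, ?_⟩
          rcases ee_eq_iff.1 (ee_surj (ee_mem_S1 (Complex.arg m))) with ⟨n, hn⟩
          have harg : Real.cos (Complex.arg (ee (Complex.arg m)) - Complex.arg m)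
              = Real.cos 0 := cos_congr_period ⟨n, by rw [hn]; ring⟩
          rw [harg, Real.cos_zero, hu1]
      rw [this, Set.ncard_singleton] at h2
      norm_num at h2
    · exfalso
      obtain ⟨x, hxd, hxs⟩ := hmeet
      have := ((mem_disk_iff m hm r hr (Complex.arg x)).1).1 (by rw [ee_surj hxs]; exact hxd)
      have hc := Real.cos_le_one (Complex.arg x - Complex.arg m)
      linarith

open Finset

lemma Fshift_left (x ca : ℝ) (h0 : 0 < ca) (h2 : ca < 2*Real.pi) :
    ∃ δ > (0:ℝ), ∀ t, 0 < t → t < δ → (F (x - t) ≤ ca ↔ (0 < F x ∧ F x ≤ ca)) := by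
  rcases lt_trichotomy (F x) ca with h | h | h
  · rcases eq_or_lt_of_le (F_nonneg x) with h0' | h0'
    · -- F x = 0 : wrap
      refine ⟨2*Real.pi - ca, by linarith, fun t ht1 ht2 => ?_⟩
      rw [F_sub_wrap (by linarith) (by linarith)]
      constructor
      · intro hle; linarith
      · rintro ⟨hgt, -⟩; linarith
    · refine ⟨F x, h0', fun t ht1 ht2 => ?_⟩
      rw [F_sub (by linarith) (by linarith [F_lt x])]
      constructor
      · intro _; exact ⟨h0', le_of_lt h⟩
      · intro _; linarith
  · refine ⟨F x, by linarith, fun t ht1 ht2 => ?_⟩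
    rw [F_sub (by linarith) (by linarith [F_lt x])]
    constructor
    · intro _; exact ⟨by linarith, by linarith⟩
    · intro _; linarith
  · refine ⟨F x - ca, by linarith, fun t ht1 ht2 => ?_⟩
    rw [F_sub (by linarith) (by linarith [F_lt x])]
    constructor
    · intro hle; exfalso; linarith
    · rintro ⟨-, hle⟩; exfalso; linarith

lemma Fshift_right (x ca : ℝ) (h0 : 0 < ca) (h2 : ca < 2*Real.pi) :
    ∃ δ > (0:ℝ), ∀ t, 0 < t → t < δ → (F (x + t) ≤ ca ↔ F x < ca) := by
  rcases lt_or_ge (F x) ca with h | h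
  · refine ⟨ca - F x, by linarith, fun t ht1 ht2 => ?_⟩
    rw [F_add (by linarith [F_nonneg x]) (by linarith)]
    exact iff_of_true (by linarith) h
  · refine ⟨2*Real.pi - F x, by linarith [F_lt x], fun t ht1 ht2 => ?_⟩
    rw [F_add (by linarith [F_nonneg x]) (by linarith)]
    exact iff_of_false (by linarith) (by linarith)

variable {ι : Type} [Fintype ι]

noncomputable def Af (P : ι → Prop) : Finset ι := univ.filter P
noncomputable def ff (P : ι → Prop) : ℕ := (univ.filter fun i => ¬ P i).card
noncomputable def Lf (P : ι → Prop) (α c : ι → ℝ) (s : ℝ) : ℕ :=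
  ff P + ((Af P).filter fun i => 0 < F (s - α i) ∧ F (s - α i) ≤ c i).card
noncomputable def Rf (P : ι → Prop) (α c : ι → ℝ) (s : ℝ) : ℕ :=
  ff P + ((Af P).filter fun i => F (s - α i) < c i).card
noncomputable def SPf (P : ι → Prop) (α : ι → ℝ) : Finset ℂ := (Af P).image fun i => ee (α i)
noncomputable def Uf (P : ι → Prop) (α c : ι → ℝ) (H : ℂ → ℕ) (k : ℕ) : Finset ℂ :=
  (SPf P α).filter fun x => Lf P α c (Complex.arg x) < k ∧ k ≤ H x

section main
variable (P : ι → Prop) (α c : ι → ℝ) (H : ℂ → ℕ)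
variable (hc : ∀ i, P i → 0 < c i ∧ c i < 2*Real.pi)
variable (hH : ∀ t : ℝ, H (ee t) = (Finset.univ.filter (fun i => ¬ P i)).card
      + (Finset.univ.filter (fun i => P i ∧ F (t - α i) ≤ c i)).card)

include hH in
lemma g_eq (t : ℝ) :
    H (ee t) = ff P + ((Af P).filter fun i => F (t - α i) ≤ c i).card := by
  rw [hH t, ff, Af, Finset.filter_filter]

lemma Lf_congr {s s' : ℝ} (h : ee s = ee s') : Lf P α c s = Lf P α c s' := by
  rcases ee_eq_iff.1 h with ⟨n, rfl⟩
  unfold Lf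
  congr 1
  have : (fun i => 0 < F (s' + 2*Real.pi*n - α i) ∧ F (s' + 2*Real.pi*n - α i) ≤ c i)
      = (fun i => 0 < F (s' - α i) ∧ F (s' - α i) ≤ c i) := by
    funext i
    rw [show s' + 2*Real.pi*(n:ℝ) - α i = (s' - α i) + 2*Real.pi*n by ring, F_eq_of_int]
  simp only [this]

include hH in
lemma Lf_le (s : ℝ) : Lf P α c s ≤ H (ee s) := by
  rw [g_eq P α c H hH s]
  refine Nat.add_le_add_left (Finset.card_le_card ?_) _
  intro i hi
  simp only [Finset.mem_filter] at hi ⊢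
  exact ⟨hi.1, hi.2.2⟩

include hH in
lemma Rf_le (s : ℝ) : Rf P α c s ≤ H (ee s) := by
  rw [g_eq P α c H hH s]
  refine Nat.add_le_add_left (Finset.card_le_card ?_) _
  intro i hi
  simp only [Finset.mem_filter] at hi ⊢
  exact ⟨hi.1, le_of_lt hi.2⟩

include hH hc in
lemma sigma_eq (s : ℝ) :
    H (ee s) = Lf P α c s + ((Af P).filter fun i => F (s - α i) = 0).card := by
  rw [g_eq P α c H hH s, Lf, add_assoc]
  congr 1
  rw [← Finset.card_union_of_disjoint]
  · congr 1
    ext i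
    simp only [Finset.mem_filter, Finset.mem_union]
    constructor
    · rintro ⟨hiA, hle⟩
      rcases eq_or_lt_of_le (F_nonneg (s - α i)) with h0 | h0
      · exact Or.inr ⟨hiA, h0.symm⟩
      · exact Or.inl ⟨hiA, h0, hle⟩
    · rintro (⟨hiA, h1, h2⟩ | ⟨hiA, h0⟩)
      · exact ⟨hiA, h2⟩
      · refine ⟨hiA, ?_⟩
        rw [h0]
        have hP : P i := (Finset.mem_filter.1 hiA).2
        exact le_of_lt (hc i hP).1
  · rw [Finset.disjoint_filter]
    rintro i _ ⟨h1, _⟩ h0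
    rw [h0] at h1
    exact lt_irrefl 0 h1

include hH hc in
lemma left_limit (s : ℝ) :
    ∃ δ > (0:ℝ), ∀ t, 0 < t → t < δ → H (ee (s - t)) = Lf P α c s := by
  have hex : ∀ i : ι, ∃ δ > (0:ℝ), ∀ t, 0 < t → t < δ →
      (P i → (F (s - α i - t) ≤ c i ↔ (0 < F (s - α i) ∧ F (s - α i) ≤ c i))) := by
    intro i
    by_cases hPi : P i
    · obtain ⟨δ, hδ0, hδ⟩ := Fshift_left (s - α i) (c i) (hc i hPi).1 (hc i hPi).2
      exact ⟨δ, hδ0, fun t ht1 ht2 _ => hδ t ht1 ht2⟩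
    · exact ⟨1, one_pos, fun t _ _ hPi' => absurd hPi' hPi⟩
  choose δ hδ0 hδ using hex
  rcases isEmpty_or_nonempty ι with hemp | hne
  · refine ⟨1, one_pos, fun t ht1 ht2 => ?_⟩
    rw [g_eq P α c H hH, Lf]
    have : (Af P) = ∅ := Finset.eq_empty_of_isEmpty _
    rw [this]
    simp
  · have huniv : (Finset.univ : Finset ι).Nonempty := Finset.univ_nonempty
    refine ⟨Finset.univ.inf' huniv δ, ?_, fun t ht1 ht2 => ?_⟩
    · simp only [gt_iff_lt, Finset.lt_inf'_iff]
      intro i _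
      exact hδ0 i
    · rw [g_eq P α c H hH, Lf]
      have heq : ((Af P).filter fun i => F (s - t - α i) ≤ c i)
          = ((Af P).filter fun i => 0 < F (s - α i) ∧ F (s - α i) ≤ c i) := by
        apply Finset.filter_congr
        intro i hiA
        have hPi : P i := (Finset.mem_filter.1 hiA).2
        have ht2' : t < δ i := lt_of_lt_of_le ht2 (Finset.inf'_le _ (Finset.mem_univ i))
        rw [show s - t - α i = s - α i - t by ring]
        exact hδ i t ht1 ht2' hPi
      rw [heq]

include hH hc in
lemma right_limit (s : ℝ) :
    ∃ δ > (0:ℝ), ∀ t, 0 < t → t < δ → H (ee (s + t)) = Rf P α c s := by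
  have hex : ∀ i : ι, ∃ δ > (0:ℝ), ∀ t, 0 < t → t < δ →
      (P i → (F (s - α i + t) ≤ c i ↔ F (s - α i) < c i)) := by
    intro i
    by_cases hPi : P i
    · obtain ⟨δ, hδ0, hδ⟩ := Fshift_right (s - α i) (c i) (hc i hPi).1 (hc i hPi).2
      exact ⟨δ, hδ0, fun t ht1 ht2 _ => hδ t ht1 ht2⟩
    · exact ⟨1, one_pos, fun t _ _ hPi' => absurd hPi' hPi⟩
  choose δ hδ0 hδ using hex
  rcases isEmpty_or_nonempty ι with hemp | hne
  · refine ⟨1, one_pos, fun t ht1 ht2 => ?_⟩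
    rw [g_eq P α c H hH, Rf]
    have : (Af P) = ∅ := Finset.eq_empty_of_isEmpty _
    rw [this]
    simp
  · have huniv : (Finset.univ : Finset ι).Nonempty := Finset.univ_nonempty
    refine ⟨Finset.univ.inf' huniv δ, ?_, fun t ht1 ht2 => ?_⟩
    · simp only [gt_iff_lt, Finset.lt_inf'_iff]
      intro i _
      exact hδ0 i
    · rw [g_eq P α c H hH, Rf]
      have heq : ((Af P).filter fun i => F (s + t - α i) ≤ c i)
          = ((Af P).filter fun i => F (s - α i) < c i) := by
        apply Finset.filter_congr
        intro i hiA
        have hPi : P i := (Finset.mem_filter.1 hiA).2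
        have ht2' : t < δ i := lt_of_lt_of_le ht2 (Finset.inf'_le _ (Finset.mem_univ i))
        rw [show s + t - α i = s - α i + t by ring]
        exact hδ i t ht1 ht2' hPi
      rw [heq]

lemma SPf_mem_S1 {x : ℂ} (hx : x ∈ SPf P α) : x ∈ S1 := by
  rcases Finset.mem_image.1 hx with ⟨i, _, rfl⟩
  exact ee_mem_S1 _

include hH in
lemma val_le (x : ℂ) (hx : x ∈ S1) : H x ≤ Fintype.card ι := by
  conv_lhs => rw [← ee_surj hx]
  rw [g_eq P α c H hH]
  have h1 : ((Af P).filter fun i => F (Complex.arg x - α i) ≤ c i).card ≤ (Af P).card :=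
    Finset.card_le_card (Finset.filter_subset _ _)
  have h2 : ff P + (Af P).card = Fintype.card ι := by
    rw [ff, Af, ← Finset.card_univ, add_comm]
    exact Finset.card_filter_add_card_filter_not _
  omega

lemma image_nonempty : (H '' S1).Nonempty :=
  ⟨H (ee 0), Set.mem_image_of_mem H (ee_mem_S1 0)⟩

include hH in
lemma image_bdd : BddAbove (H '' S1) := by
  refine ⟨Fintype.card ι, ?_⟩
  rintro y ⟨x, hx, rfl⟩
  exact val_le P α c H hH x hx

include hH in
lemma maxOn_le_card : maxOnS1 H ≤ Fintype.card ι := by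
  apply csSup_le (image_nonempty H)
  rintro y ⟨x, hx, rfl⟩
  exact val_le P α c H hH x hx

include hH in
lemma maxOn_mem : maxOnS1 H ∈ H '' S1 :=
  Nat.sSup_mem (image_nonempty H) (image_bdd P α c H hH)

lemma minOn_mem : minOnS1 H ∈ H '' S1 := Nat.sInf_mem (image_nonempty H)

include hH in
lemma le_maxOn {x : ℂ} (hx : x ∈ S1) : H x ≤ maxOnS1 H :=
  le_csSup (image_bdd P α c H hH) (Set.mem_image_of_mem H hx)

lemma minOn_le' {x : ℂ} (hx : x ∈ S1) : minOnS1 H ≤ H x :=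
  Nat.sInf_le (Set.mem_image_of_mem H hx)

include hH in
lemma ff_le_minOn : ff P ≤ minOnS1 H := by
  rcases minOn_mem H with ⟨x, hx, hxe⟩
  rw [← hxe, ← ee_surj hx, g_eq P α c H hH]
  exact Nat.le_add_right _ _

include hH hc in
lemma minOn_le_Lf (s : ℝ) : minOnS1 H ≤ Lf P α c s := by
  obtain ⟨δ, hδ0, hδ⟩ := left_limit P α c H hc hH s
  rw [← hδ (δ/2) (by linarith) (by linarith)]
  exact minOn_le' H (ee_mem_S1 _)

include hH hc in
lemma minOn_le_maxOn : minOnS1 H ≤ maxOnS1 H := by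
  rcases maxOn_mem P α c H hH with ⟨x, hx, hxe⟩
  rw [← hxe]
  exact minOn_le' H hx

include hH hc in
lemma counting :
    ∑ k ∈ Finset.Icc (minOnS1 H + 1) (maxOnS1 H), (Uf P α c H k).card = (Af P).card := by
  have step1 : ∀ k, (Uf P α c H k).card
      = ∑ x ∈ SPf P α, if (Lf P α c (Complex.arg x) < k ∧ k ≤ H x) then 1 else 0 := by
    intro k
    rw [Uf, Finset.card_filter]
  rw [Finset.sum_congr rfl fun k _ => step1 k, Finset.sum_comm]
  have step2 : ∀ x ∈ SPf P α,
      (∑ k ∈ Finset.Icc (minOnS1 H + 1) (maxOnS1 H),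
        if (Lf P α c (Complex.arg x) < k ∧ k ≤ H x) then 1 else 0)
      = ((Af P).filter fun i => ee (α i) = x).card := by
    intro x hx
    have hxS1 : x ∈ S1 := SPf_mem_S1 P α hx
    have hsig := sigma_eq P α c H hc hH (Complex.arg x)
    rw [ee_surj hxS1] at hsig
    have hsigset : ((Af P).filter fun i => F (Complex.arg x - α i) = 0)
        = ((Af P).filter fun i => ee (α i) = x) := by
      apply Finset.filter_congr
      intro i _
      rw [← ee_eq_ee_iff_F, ee_surj hxS1, eq_comm]
    rw [hsigset] at hsig
    rw [← Finset.card_filter]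
    have hL : minOnS1 H ≤ Lf P α c (Complex.arg x) := minOn_le_Lf P α c H hc hH _
    have hM : H x ≤ maxOnS1 H := le_maxOn P α c H hH hxS1
    have : (Finset.Icc (minOnS1 H + 1) (maxOnS1 H)).filter
        (fun k => Lf P α c (Complex.arg x) < k ∧ k ≤ H x)
        = Finset.Icc (Lf P α c (Complex.arg x) + 1) (H x) := by
      ext k
      simp only [Finset.mem_filter, Finset.mem_Icc]
      omega
    rw [this, Nat.card_Icc]
    omega
  rw [Finset.sum_congr rfl step2]
  exact (Finset.card_eq_sum_card_fiberwise (fun i hi => Finset.mem_image_of_mem _ hi)).symm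

include hH hc in
lemma mem_SPf_of_sigma {s : ℝ} (hσ : 0 < ((Af P).filter fun i => F (s - α i) = 0).card) :
    ee s ∈ SPf P α := by
  obtain ⟨i, hi⟩ := Finset.card_pos.1 hσ
  rcases Finset.mem_filter.1 hi with ⟨hiA, hF⟩
  exact Finset.mem_image.2 ⟨i, hiA, ((ee_eq_ee_iff_F s (α i)).2 hF).symm⟩

include hH hc in
lemma mem_Uf {s : ℝ} {k : ℕ} (h1 : Lf P α c s < k) (h2 : k ≤ H (ee s)) :
    ee s ∈ Uf P α c H k := by
  have hsig := sigma_eq P α c H hc hH s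
  have hσ : 0 < ((Af P).filter fun i => F (s - α i) = 0).card := by omega
  refine Finset.mem_filter.2 ⟨mem_SPf_of_sigma P α c H hc hH hσ, ?_, h2⟩
  rwa [Lf_congr P α c (ee_surj (ee_mem_S1 s))]

include hH hc in
lemma reach (k : ℕ) (hk : minOnS1 H < k) (s : ℝ) (hs : k ≤ H (ee s)) :
    ∃ x ∈ Uf P α c H k, ∃ C : Set ℂ,
      IsPreconnected C ∧ C ⊆ superlevel H k ∧ ee s ∈ C ∧ x ∈ C := by
  by_cases hLs : Lf P α c s < k
  · exact ⟨ee s, mem_Uf P α c H hc hH hLs hs, {ee s}, isPreconnected_singleton,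
      by rintro z rfl; exact ⟨ee_mem_S1 s, hs⟩, rfl, rfl⟩
  push_neg at hLs
  -- find a low point
  obtain ⟨y, hyS1, hy⟩ := minOn_mem H
  set sy := Complex.arg y with hsy
  have hgsy : H (ee sy) < k := by rw [ee_surj hyS1, hy]; exact hk
  set B : Set ℝ := {t | t ∈ Set.Ioc 0 (2*Real.pi) ∧ H (ee (s - t)) < k} with hB
  have hty_mem : toIocMod two_pi_pos 0 (s - sy) ∈ B := by
    have h1 := toIocMod_mem_Ioc two_pi_pos 0 (s - sy)
    rw [zero_add] at h1
    have h2 : ee (s - toIocMod two_pi_pos 0 (s - sy)) = ee sy := by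
      have := self_sub_toIocMod two_pi_pos 0 (s - sy)
      apply ee_eq_iff.2
      refine ⟨toIocDiv two_pi_pos 0 (s - sy), ?_⟩
      have h3 : (s - sy) - toIocMod two_pi_pos 0 (s - sy)
          = (toIocDiv two_pi_pos 0 (s - sy) : ℤ) • (2*Real.pi) := this
      rw [zsmul_eq_mul] at h3
      linarith [h3]
    exact ⟨h1, by rw [h2]; exact hgsy⟩
  have hBne : B.Nonempty := ⟨_, hty_mem⟩
  have hBbdd : BddBelow B := ⟨0, fun t ht => le_of_lt ht.1.1⟩
  set t₁ := sInf B with ht₁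
  obtain ⟨δ₀, hδ₀0, hδ₀⟩ := left_limit P α c H hc hH s
  have hδ₀B : ∀ b ∈ B, δ₀ ≤ b := by
    intro b hb
    by_contra hlt
    push_neg at hlt
    have heq := hδ₀ b hb.1.1 hlt
    have hlt2 := hb.2
    rw [heq] at hlt2
    omega
  have ht₁pos : 0 < t₁ := lt_of_lt_of_le hδ₀0 (le_csInf hBne hδ₀B)
  have ht₁le : t₁ ≤ 2*Real.pi := by
    have h1 := csInf_le hBbdd hty_mem
    have h2 := (toIocMod_mem_Ioc two_pi_pos 0 (s - sy)).2
    rw [zero_add] at h2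
    linarith
  have claim_i : ∀ t, 0 ≤ t → t < t₁ → k ≤ H (ee (s - t)) := by
    intro t ht0 htl
    rcases eq_or_lt_of_le ht0 with rfl | ht0'
    · simpa using hs
    · by_contra hgt
      push_neg at hgt
      have : t ∈ B := ⟨⟨ht0', by linarith⟩, hgt⟩
      have := csInf_le hBbdd this
      linarith
  have claim_ii : k ≤ H (ee (s - t₁)) := by
    obtain ⟨δ₁, hδ₁0, hδ₁⟩ := right_limit P α c H hc hH (s - t₁)
    have htpos : 0 < min (δ₁/2) (t₁/2) := by positivity
    have h1 := hδ₁ _ htpos (by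
      calc min (δ₁/2) (t₁/2) ≤ δ₁/2 := min_le_left _ _
        _ < δ₁ := by linarith)
    rw [show s - t₁ + min (δ₁/2) (t₁/2) = s - (t₁ - min (δ₁/2) (t₁/2)) by ring] at h1
    have h2 := claim_i (t₁ - min (δ₁/2) (t₁/2))
      (by have := min_le_right (δ₁/2) (t₁/2); linarith)
      (by linarith)
    rw [h1] at h2
    exact le_trans h2 (Rf_le P α c H hH _)
  have claim_iii : Lf P α c (s - t₁) < k := by
    obtain ⟨δ₂, hδ₂0, hδ₂⟩ := left_limit P α c H hc hH (s - t₁)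
    obtain ⟨b, hbB, hblt⟩ : ∃ b ∈ B, b < t₁ + δ₂ := by
      by_contra hcon
      push_neg at hcon
      have := le_csInf hBne hcon
      linarith
    have hbge : t₁ ≤ b := csInf_le hBbdd hbB
    have hbne : b ≠ t₁ := by
      rintro rfl
      have := hbB.2
      omega
    have hbgt : t₁ < b := lt_of_le_of_ne hbge (Ne.symm hbne)
    have h3 := hδ₂ (b - t₁) (by linarith) (by linarith)
    rw [show s - t₁ - (b - t₁) = s - b by ring] at h3
    have := hbB.2
    omega
  refine ⟨ee (s - t₁), mem_Uf P α c H hc hH claim_iii claim_ii, ee '' Set.Icc (s - t₁) s,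
    (isPreconnected_Icc).image ee continuous_ee.continuousOn, ?_, ?_, ?_⟩
  · rintro z ⟨τ, hτ, rfl⟩
    refine ⟨ee_mem_S1 τ, ?_⟩
    rcases eq_or_lt_of_le hτ.1 with rfl | hlt
    · exact claim_ii
    · have h4 := claim_i (s - τ) (by linarith [hτ.2]) (by linarith)
      rwa [show s - (s - τ) = τ by ring] at h4
  · exact ⟨s, ⟨by linarith, le_refl s⟩, rfl⟩
  · exact ⟨s - t₁, ⟨le_refl _, by linarith⟩, rfl⟩
lemma superlevel_subset_S1 (k : ℕ) : superlevel H k ⊆ S1 := fun _ h => h.1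

include hH hc in
lemma separation (k : ℕ) {x x' : ℂ} (hx : x ∈ Uf P α c H k) (hx' : x' ∈ Uf P α c H k)
    (hne : x ≠ x') (D : Set ℂ) (hD : IsPreconnected D) (hDs : D ⊆ superlevel H k)
    (hxD : x ∈ D) (hx'D : x' ∈ D) : False := by
  have hπ := two_pi_pos
  rcases Finset.mem_filter.1 hx with ⟨hxSP, hxL, hxk⟩
  rcases Finset.mem_filter.1 hx' with ⟨hxSP', hxL', hxk'⟩
  have hxS1 : x ∈ S1 := SPf_mem_S1 P α hxSP
  have hxS1' : x' ∈ S1 := SPf_mem_S1 P α hxSP'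
  set sx := Complex.arg x with hsx
  set sx' := Complex.arg x' with hsx'
  have hex : ee sx = x := ee_surj hxS1
  have hex' : ee sx' = x' := ee_surj hxS1'
  set d := toIocMod two_pi_pos 0 (sx' - sx) with hd
  have hdIoc := toIocMod_mem_Ioc two_pi_pos 0 (sx' - sx)
  rw [zero_add] at hdIoc
  have hshift : sx + d = sx' + 2*Real.pi * (-(toIocDiv two_pi_pos 0 (sx' - sx) : ℤ)) := by
    have h3 : (sx' - sx) - d = (toIocDiv two_pi_pos 0 (sx' - sx) : ℤ) • (2*Real.pi) :=
      self_sub_toIocMod two_pi_pos 0 (sx' - sx)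
    rw [zsmul_eq_mul] at h3
    push_cast
    linarith
  have heed : ee (sx + d) = x' := by
    rw [← hex']
    exact ee_eq_iff.2 ⟨-(toIocDiv two_pi_pos 0 (sx' - sx)), by push_cast; linarith [hshift]⟩
  have hd2π : d < 2*Real.pi := by
    rcases lt_or_eq_of_le hdIoc.2 with h | h
    · exact h
    · exfalso
      have hde : d = 2*Real.pi := by rw [hd]; exact h
      apply hne
      rw [← hex, ← heed, hde]
      exact (ee_eq_iff.2 ⟨1, by push_cast; ring⟩).symm
  obtain ⟨δ, hδ0, hδ⟩ := left_limit P α c H hc hH sx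
  obtain ⟨δ', hδ'0, hδ'⟩ := left_limit P α c H hc hH sx'
  set ε := min δ (2*Real.pi - d) / 2 with hε
  set ε' := min δ' d / 2 with hε'
  have hε0 : 0 < ε := by
    apply div_pos _ two_pos
    exact lt_min hδ0 (by linarith)
  have hε'0 : 0 < ε' := by
    apply div_pos _ two_pos
    exact lt_min hδ'0 hdIoc.1
  have hεδ : ε < δ := by
    have := min_le_left δ (2*Real.pi - d); rw [hε]; linarith
  have hεd : ε < 2*Real.pi - d := by
    have := min_le_right δ (2*Real.pi - d); rw [hε]; linarith
  have hε'δ : ε' < δ' := by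
    have := min_le_left δ' d; rw [hε']; linarith
  have hε'd : ε' < d := by
    have := min_le_right δ' d; rw [hε']; linarith
  have hpk : H (ee (sx - ε)) < k := by rw [hδ ε hε0 hεδ]; exact hxL
  have hqk : H (ee (sx + d - ε')) < k := by
    have : ee (sx + d - ε') = ee (sx' - ε') := by
      exact ee_eq_iff.2 ⟨-(toIocDiv two_pi_pos 0 (sx' - sx)), by push_cast; linarith [hshift]⟩
    rw [this, hδ' ε' hε'0 hε'δ]
    exact hxL'
  set K₁ := ee '' Set.Icc (sx + d - ε') (sx + 2*Real.pi - ε) with hK₁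
  set K₂ := ee '' Set.Icc (sx - ε) (sx + d - ε') with hK₂
  have hK₁c : IsClosed K₁ := (isCompact_Icc.image continuous_ee).isClosed
  have hK₂c : IsClosed K₂ := (isCompact_Icc.image continuous_ee).isClosed
  have hcover : D ⊆ K₁ ∪ K₂ := by
    intro z hz
    have hzS1 : z ∈ S1 := (hDs hz).1
    set τ := toIcoMod two_pi_pos (sx - ε) (Complex.arg z) with hτ
    have hτIco := toIcoMod_mem_Ico two_pi_pos (sx - ε) (Complex.arg z)
    have hτe : ee τ = z := by
      have h3 : (Complex.arg z) - τ = (toIcoDiv two_pi_pos (sx - ε) (Complex.arg z) : ℤ) • (2*Real.pi) :=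
        self_sub_toIcoMod two_pi_pos (sx - ε) (Complex.arg z)
      rw [zsmul_eq_mul] at h3
      rw [← ee_surj hzS1]
      exact ee_eq_iff.2 ⟨-(toIcoDiv two_pi_pos (sx - ε) (Complex.arg z)), by push_cast; linarith⟩
    rcases le_total τ (sx + d - ε') with hle | hle
    · exact Or.inr ⟨τ, ⟨hτIco.1, hle⟩, hτe⟩
    · refine Or.inl ⟨τ, ⟨hle, ?_⟩, hτe⟩
      have := hτIco.2
      linarith
  have hint : D ∩ (K₁ ∩ K₂) = ∅ := by
    rw [Set.eq_empty_iff_forall_notMem]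
    rintro z ⟨hzD, ⟨τ₁, hτ₁, he₁⟩, ⟨τ₂, hτ₂, he₂⟩⟩
    have hzk : k ≤ H z := (hDs hzD).2
    have h12 : ee τ₁ = ee τ₂ := by rw [he₁, he₂]
    rcases ee_eq_iff.1 h12 with ⟨n, hn⟩
    have hn0 : (0:ℝ) ≤ 2*Real.pi*n := by
      have := hτ₁.1; have := hτ₂.2; linarith
    have hn1 : 2*Real.pi*(n:ℝ) ≤ 2*Real.pi := by
      have := hτ₁.2; have := hτ₂.1; linarith
    have : n = 0 ∨ n = 1 := by
      have i0 : (0:ℤ) ≤ n := by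
        by_contra hcon
        push_neg at hcon
        have hcon' : n ≤ -1 := by omega
        have : (n:ℝ) ≤ -1 := by exact_mod_cast hcon'
        nlinarith
      have i1 : n ≤ 1 := by
        by_contra hcon
        push_neg at hcon
        have : (2:ℝ) ≤ (n:ℝ) := by exact_mod_cast hcon
        nlinarith
      omega
    rcases this with rfl | rfl
    · push_cast at hn
      have hτeq : τ₁ = τ₂ := by linarith
      have : τ₁ = sx + d - ε' := le_antisymm (hτeq ▸ hτ₂.2) hτ₁.1
      rw [this] at he₁
      rw [← he₁] at hzk
      omega
    · push_cast at hn
      have hτ₂eq : τ₂ = sx - ε := by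
        have h1 := hτ₁.2
        have h2 := hτ₂.1
        linarith
      rw [hτ₂eq] at he₂
      rw [← he₂] at hzk
      omega
  have hxK₂ : x ∈ D ∩ K₂ := ⟨hxD, ⟨sx, ⟨by linarith, by linarith⟩, hex⟩⟩
  have hx'K₁ : x' ∈ D ∩ K₁ := ⟨hx'D, ⟨sx + d, ⟨by linarith, by linarith⟩, heed⟩⟩
  obtain ⟨z, hz⟩ := isPreconnected_closed_iff.1 hD K₁ K₂ hK₁c hK₂c hcover
    ⟨x', hx'K₁⟩ ⟨x, hxK₂⟩
  rw [Set.eq_empty_iff_forall_notMem] at hint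
  exact hint z hz

include hH hc in
lemma numCC_eq (k : ℕ) (hk1 : minOnS1 H < k) (hk2 : k ≤ maxOnS1 H) :
    numCC (superlevel H k) = (Uf P α c H k).card ∧ 0 < (Uf P α c H k).card := by
  have hUSk : ∀ x ∈ Uf P α c H k, x ∈ superlevel H k := by
    intro x hx
    rcases Finset.mem_filter.1 hx with ⟨hxSP, _, hxk⟩
    exact ⟨SPf_mem_S1 P α hxSP, hxk⟩
  set Φ : {x // x ∈ Uf P α c H k} → ConnectedComponents ↥(superlevel H k) :=
    fun u => ConnectedComponents.mk ⟨u.1, hUSk u.1 u.2⟩ with hΦ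
  have hsurj : Function.Surjective Φ := by
    intro comp
    obtain ⟨y, rfl⟩ := ConnectedComponents.surjective_coe comp
    have hyS1 : (y : ℂ) ∈ S1 := y.2.1
    have hyk : k ≤ H (ee (Complex.arg (y : ℂ))) := by
      rw [ee_surj hyS1]; exact y.2.2
    obtain ⟨x, hxU, C, hC, hCs, hsC, hxC⟩ :=
      reach P α c H hc hH k hk1 (Complex.arg (y : ℂ)) hyk
    refine ⟨⟨x, hxU⟩, ?_⟩
    set C' : Set ↥(superlevel H k) := Subtype.val ⁻¹' C with hC'
    have hval : Subtype.val '' C' = C := by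
      rw [hC', Subtype.image_preimage_coe]
      exact Set.inter_eq_self_of_subset_right hCs
    have hC'p : IsPreconnected C' := by
      rw [← Topology.IsInducing.subtypeVal.isPreconnected_image, hval]
      exact hC
    have hyC' : y ∈ C' := by
      have : (y : ℂ) ∈ C := by rw [← ee_surj hyS1]; exact hsC
      exact this
    have hxC' : (⟨x, hUSk x hxU⟩ : ↥(superlevel H k)) ∈ C' := hxC
    have hsub := hC'p.subset_connectedComponent hyC'
    exact (ConnectedComponents.coe_eq_coe').2 (hsub hxC')
  have hinj : Function.Injective Φ := by
    intro u u' huu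
    have hmem : (⟨u'.1, hUSk u'.1 u'.2⟩ : ↥(superlevel H k))
        ∈ connectedComponent (⟨u.1, hUSk u.1 u.2⟩ : ↥(superlevel H k)) := by
      exact (ConnectedComponents.coe_eq_coe').1 huu.symm
    by_contra hne
    have hne' : u.1 ≠ u'.1 := fun h => hne (Subtype.ext h)
    set D : Set ℂ := Subtype.val '' connectedComponent (⟨u.1, hUSk u.1 u.2⟩ :
      ↥(superlevel H k)) with hD
    refine separation P α c H hc hH k u.2 u'.2 hne' D
      (isPreconnected_connectedComponent.image _ continuous_subtype_val.continuousOn)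
      ?_ ⟨_, mem_connectedComponent, rfl⟩ ⟨_, hmem, rfl⟩
    rintro z ⟨w, _, rfl⟩
    exact w.2
  haveI : Finite (ConnectedComponents ↥(superlevel H k)) := Finite.of_surjective Φ hsurj
  have h1 : numCC (superlevel H k) ≤ (Uf P α c H k).card := by
    have := Nat.card_le_card_of_surjective Φ hsurj
    rwa [Nat.card_eq_finsetCard] at this
  have h2 : (Uf P α c H k).card ≤ numCC (superlevel H k) := by
    have := Nat.card_le_card_of_injective Φ hinj
    rwa [Nat.card_eq_finsetCard] at this
  have h3 : 0 < (Uf P α c H k).card := by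
    obtain ⟨z, hzS1, hze⟩ := maxOn_mem P α c H hH
    have hzk : k ≤ H (ee (Complex.arg z)) := by rw [ee_surj hzS1, hze]; exact hk2
    obtain ⟨x, hxU, -⟩ := reach P α c H hc hH k hk1 (Complex.arg z) hzk
    exact Finset.card_pos.2 ⟨x, hxU⟩
  exact ⟨le_antisymm h1 h2, h3⟩

include hH hc in
theorem abstract_main :
    max (maxOnS1 H) (maxOnS1 H - minOnS1 H + tau H) ≤ Fintype.card ι ∧
      Fintype.card ι ≤ maxOnS1 H + tau H := by
  have hcount := counting P α c H hc hH
  have hnum : ∀ k ∈ Finset.Icc (minOnS1 H + 1) (maxOnS1 H),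
      numCC (superlevel H k) = (Uf P α c H k).card ∧ 0 < (Uf P α c H k).card := by
    intro k hk
    rcases Finset.mem_Icc.1 hk with ⟨h1, h2⟩
    exact numCC_eq P α c H hc hH k (by omega) h2
  have hIcc : (Finset.Icc (minOnS1 H + 1) (maxOnS1 H)).card = maxOnS1 H - minOnS1 H := by
    rw [Nat.card_Icc]; omega
  have key : ∀ k ∈ Finset.Icc (minOnS1 H + 1) (maxOnS1 H),
      (Uf P α c H k).card = (numCC (superlevel H k) - 1) + 1 := by
    intro k hk
    have h := hnum k hk
    omega
  have h1 : (Af P).card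
      = tau H + (Finset.Icc (minOnS1 H + 1) (maxOnS1 H)).card := by
    rw [← hcount, Finset.sum_congr rfl key, Finset.sum_add_distrib, Finset.sum_const,
      smul_eq_mul, mul_one, tau]
  have htau : tau H + (maxOnS1 H - minOnS1 H) = (Af P).card := by omega
  have hcardsplit : ff P + (Af P).card = Fintype.card ι := by
    rw [ff, Af, ← Finset.card_univ, add_comm]
    exact Finset.card_filter_add_card_filter_not _
  have hfm : ff P ≤ minOnS1 H := ff_le_minOn P α c H hH
  have hmM : minOnS1 H ≤ maxOnS1 H := minOn_le_maxOn P α c H hc hH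
  have hMn : maxOnS1 H ≤ Fintype.card ι := maxOn_le_card P α c H hH
  constructor
  · apply max_le hMn
    omega
  · omega
end main

end S17


/-- if `H_v` is properly u.s.c., all boundary traces have exactly 0
or 2 elements, and every disk meets `S¹`, then
`max(H_v*, H_v* − H_{v*} + τ(H_v)) ≤ n ≤ H_v* + τ(H_v)`. -/
theorem stmt17 {n : ℕ} (v : Fin n → ℂ × ℝ) (hr : ∀ i, 0 < (v i).2)
    (h : ProperlyUSC (Hsum v))
    (hcard : ∀ i : Fin n,
      bTrace (v i).1 (v i).2 = ∅ ∨ (bTrace (v i).1 (v i).2).ncard = 2)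
    (hmeet : ∀ i : Fin n, ({y : ℂ | ‖y - (v i).1‖ ≤ (v i).2} ∩ S1).Nonempty) :
    max (maxOnS1 (Hsum v)) (maxOnS1 (Hsum v) - minOnS1 (Hsum v) + tau (Hsum v)) ≤ n ∧
    n ≤ maxOnS1 (Hsum v) + tau (Hsum v) := by
  classical
  open S17 in
  have hclass : ∀ i : Fin n, ∃ ac : ℝ × ℝ,
      (∀ x ∈ S1, ‖x - (v i).1‖ ≤ (v i).2) ∨
      (0 < ac.2 ∧ ac.2 < 2*Real.pi ∧
        ∀ t : ℝ, (‖S17.ee t - (v i).1‖ ≤ (v i).2 ↔ S17.F (t - ac.1) ≤ ac.2)) := by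
    intro i
    rcases S17.classify (v i).1 (v i).2 (hr i) (hcard i) (hmeet i) with hfull | ⟨α, c, hc1, hc2, hiff⟩
    · exact ⟨(0, 0), Or.inl hfull⟩
    · exact ⟨(α, c), Or.inr ⟨hc1, hc2, hiff⟩⟩
  choose ac hac using hclass
  set P : Fin n → Prop := fun i => ¬ (∀ x ∈ S1, ‖x - (v i).1‖ ≤ (v i).2) with hP
  have hspec : ∀ i, P i → (0 < (ac i).2 ∧ (ac i).2 < 2*Real.pi ∧
      ∀ t : ℝ, (‖S17.ee t - (v i).1‖ ≤ (v i).2 ↔ S17.F (t - (ac i).1) ≤ (ac i).2)) := by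
    intro i hPi
    rcases hac i with hfull | hrest
    · exact absurd hfull hPi
    · exact hrest
  have hc : ∀ i, P i → 0 < (ac i).2 ∧ (ac i).2 < 2*Real.pi :=
    fun i hPi => ⟨(hspec i hPi).1, (hspec i hPi).2.1⟩
  have hH : ∀ t : ℝ, Hsum v (S17.ee t)
      = (Finset.univ.filter (fun i => ¬ P i)).card
      + (Finset.univ.filter (fun i => P i ∧ S17.F (t - (ac i).1) ≤ (ac i).2)).card := by
    intro t
    rw [Hsum, ← Finset.sum_filter_add_sum_filter_not Finset.univ P]
    rw [add_comm]
    congr 1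
    · rw [Finset.card_eq_sum_ones]
      apply Finset.sum_congr rfl
      intro i hi
      have hfull : ∀ x ∈ S1, ‖x - (v i).1‖ ≤ (v i).2 :=
        not_not.1 (Finset.mem_filter.1 hi).2
      rw [signal, if_pos (hfull (S17.ee t) (S17.ee_mem_S1 t))]
    · rw [← Finset.filter_filter, Finset.card_filter]
      apply Finset.sum_congr rfl
      intro i hi
      have hPi : P i := (Finset.mem_filter.1 hi).2
      rw [signal]
      by_cases hmem : S17.F (t - (ac i).1) ≤ (ac i).2
      · rw [if_pos (((hspec i hPi).2.2 t).2 hmem), if_pos hmem]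
      · rw [if_neg (fun hle => hmem (((hspec i hPi).2.2 t).1 hle)), if_neg hmem]
  have habs := S17.abstract_main P (fun i => (ac i).1) (fun i => (ac i).2) (Hsum v) hc
    (fun t => by rw [hH t]; congr!)
  rwa [Fintype.card_fin] at habs
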